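/- Suppose f : ℝ → ℝ is continuous, F is its primitive with F(0)=0, 0 < θ F(t) ≤ t f(t) for all t ≠ 0 with θ > 3 - μ where 0 < μ < 1, and the function t ↦ (f(t)t - (2-μ)F(t))/|t|^{3-μ} is non-increasing on (-∞,0) and non-decreasing on (0,∞). Then for each fixed t ≠ 0 the function β ↦ F(βt)/β^{3-μ} is strictly increasing on (0, ∞). -/

import Mathlib

open Real intervalIntegral

theorem stmt2 (f F : ℝ → ℝ) (hf : Continuous f) (hF0 : F 0 = 0)
    (hF : ∀ t, F t = ∫ s in (0:ℝ)..t, f s)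
    (μ θ : ℝ) (hμ : 0 < μ) (hμ1 : μ < 1) (hθ : θ > 3 - μ)
    (hAR : ∀ t : ℝ, t ≠ 0 → 0 < θ * F t ∧ θ * F t ≤ t * f t)
    (hdec : AntitoneOn (fun t => (f t * t - (2 - μ) * F t) / |t| ^ (3 - μ)) (Set.Iio 0))
    (hinc : MonotoneOn (fun t => (f t * t - (2 - μ) * F t) / |t| ^ (3 - μ)) (Set.Ioi 0)) :
    ∀ t : ℝ, t ≠ 0 → StrictMonoOn (fun β => F (β * t) / β ^ (3 - μ)) (Set.Ioi (0:ℝ)) := by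
  intro t ht
  -- F has derivative f everywhere
  have hFeq : F = fun u => ∫ s in (0:ℝ)..u, f s := funext hF
  have hFd : ∀ x : ℝ, HasDerivAt F (f x) x := by
    intro x
    rw [hFeq]
    exact integral_hasDerivAt_right (hf.intervalIntegrable _ _)
      hf.stronglyMeasurable.stronglyMeasurableAtFilter hf.continuousAt
  have hθpos : (0:ℝ) < θ := lt_trans (by linarith) hθ
  -- derivative of g
  set g' : ℝ → ℝ := fun β =>
    (f (β * t) * t * β ^ (3 - μ) - F (β * t) * ((3 - μ) * β ^ (3 - μ - 1))) /
      (β ^ (3 - μ)) ^ 2 with hg'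
  have key : ∀ β ∈ interior (Set.Ioi (0:ℝ)),
      HasDerivAt (fun β => F (β * t) / β ^ (3 - μ)) (g' β) β := by
    intro β hβ
    rw [interior_Ioi] at hβ
    have hβ0 : (0:ℝ) < β := hβ
    have h1 : HasDerivAt (fun β : ℝ => F (β * t)) (f (β * t) * t) β := by
      simpa [Function.comp_def] using (hFd (β * t)).comp β ((hasDerivAt_id β).mul_const t)
    have h2 : HasDerivAt (fun β : ℝ => β ^ (3 - μ)) ((3 - μ) * β ^ (3 - μ - 1)) β :=
      Real.hasDerivAt_rpow_const (Or.inl hβ0.ne')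
    exact h1.div h2 (by positivity)
  have keypos : ∀ β ∈ interior (Set.Ioi (0:ℝ)), 0 < g' β := by
    intro β hβ
    rw [interior_Ioi] at hβ
    have hβ0 : (0:ℝ) < β := hβ
    have hβt : β * t ≠ 0 := mul_ne_zero hβ0.ne' ht
    obtain ⟨h1, h2⟩ := hAR (β * t) hβt
    have hFpos : 0 < F (β * t) := by nlinarith
    have hnum : 0 < f (β * t) * t * β ^ (3 - μ) - F (β * t) * ((3 - μ) * β ^ (3 - μ - 1)) := by
      have hsplit : β ^ (3 - μ) = β * β ^ (3 - μ - 1) := by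
        rw [show (3-μ:ℝ) = 1 + (3-μ-1) by ring]
        rw [Real.rpow_add hβ0, Real.rpow_one]
        ring_nf
      have hpow : 0 < β ^ (3 - μ - 1) := Real.rpow_pos_of_pos hβ0 _
      have hkey : (3 - μ) * F (β * t) < β * t * f (β * t) := by
        calc (3 - μ) * F (β * t) < θ * F (β * t) := by
              apply mul_lt_mul_of_pos_right hθ hFpos
          _ ≤ β * t * f (β * t) := h2
      have : f (β * t) * t * β ^ (3 - μ) - F (β * t) * ((3 - μ) * β ^ (3 - μ - 1))
          = (β * t * f (β * t) - (3 - μ) * F (β * t)) * β ^ (3 - μ - 1) := by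
        rw [hsplit]; ring
      rw [this]
      exact mul_pos (by linarith) hpow
    exact div_pos hnum (by positivity)
  have hcont : ContinuousOn (fun β => F (β * t) / β ^ (3 - μ)) (Set.Ioi (0:ℝ)) := by
    intro β hβ
    exact ((key β (by rwa [interior_Ioi])).continuousAt).continuousWithinAt
  exact strictMonoOn_of_hasDerivWithinAt_pos (convex_Ioi 0) hcont
    (fun x hx => (key x hx).hasDerivWithinAt) keypos
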